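/- Let n ≥ 2 and 1 < p < ∞. In the real normed linear space (ℝⁿ, ‖·‖_p), let (x, y) ∈ ℝ² and set w_1 = (x, y, 0, ..., 0). If w_1 is Birkhoff-James orthogonal in (ℝⁿ, ‖·‖_p) to w_2 = (u_1, u_2, u_3, ..., u_n), then (x, y) is Birkhoff-James orthogonal to (u_1, u_2) in (ℝ², ‖·‖_p); moreover, if (u_1, u_2, ..., u_n) is Birkhoff-James orthogonal to (x, y, 0, ..., 0) in (ℝⁿ, ‖·‖_p), then (u_1, u_2) is Birkhoff-James orthogonal to (x, y) in (ℝ², ‖·‖_p). -/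

import Mathlib

lemma normP_rpow {p : ℝ} {ι : Type*} [Fintype ι] (hp : 1 < p)
    (z : PiLp (ENNReal.ofReal p) (fun _ : ι => ℝ)) :
    ‖z‖ ^ p = ∑ i, |z i| ^ p := by
  have hp0 : (0:ℝ) < p := lt_trans one_pos hp
  have h1 : (ENNReal.ofReal p).toReal = p := ENNReal.toReal_ofReal hp0.le
  rw [PiLp.norm_eq_sum (by rw [h1]; exact hp0)]
  simp only [h1, Real.norm_eq_abs]
  rw [← Real.rpow_mul (by positivity), one_div_mul_cancel hp0.ne', Real.rpow_one]

/-- The vector `(a, b)` viewed as an element of `(ℝ², ‖·‖_p)`. -/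
noncomputable def vecP (p : ℝ) (a b : ℝ) : PiLp (ENNReal.ofReal p) (fun _ : Fin 2 => ℝ) :=
  (WithLp.equiv (ENNReal.ofReal p) (Fin 2 → ℝ)).symm ![a, b]

lemma vecP_add_smul (p a b c d l : ℝ) :
    vecP p a b + l • vecP p c d = vecP p (a + l*c) (b + l*d) := by
  ext i
  fin_cases i <;> simp [vecP]

lemma vecP_norm {p : ℝ} (hp : 1 < p) (a b : ℝ) :
    ‖vecP p a b‖ ^ p = |a| ^ p + |b| ^ p := by
  rw [normP_rpow hp, Fin.sum_univ_two]
  simp [vecP]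

lemma sum_split {n : ℕ} (f : Fin (n+2) → ℝ) :
    ∑ i, f i = f 0 + f 1 + ∑ i : Fin n, f i.succ.succ := by
  rw [Fin.sum_univ_succ, Fin.sum_univ_succ]
  simp [add_assoc]

lemma key1 {n : ℕ} {p : ℝ} (hp : 1 < p) (x y t : ℝ)
    (w₂ : PiLp (ENNReal.ofReal p) (fun _ : Fin (n + 2) => ℝ)) :
    ‖((WithLp.equiv (ENNReal.ofReal p) (Fin (n + 2) → ℝ)).symm
      (fun i => if i = 0 then x else if i = 1 then y else 0) : PiLp (ENNReal.ofReal p) (fun _ : Fin (n + 2) => ℝ)) + t • w₂‖ ^ p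
    = ‖vecP p x y + t • vecP p (w₂ 0) (w₂ 1)‖ ^ p
      + |t| ^ p * ∑ i : Fin n, |w₂ i.succ.succ| ^ p := by
  rw [vecP_add_smul, vecP_norm hp, normP_rpow hp, sum_split]
  have h0 : ∀ i : Fin (n+2),
      (((WithLp.equiv (ENNReal.ofReal p) (Fin (n + 2) → ℝ)).symm
        (fun i => if i = 0 then x else if i = 1 then y else 0) : PiLp (ENNReal.ofReal p) (fun _ : Fin (n + 2) => ℝ)) + t • w₂) i
      = (if i = 0 then x else if i = 1 then y else 0) + t * w₂ i := by
    intro i; simp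
  have v0 : (if (0 : Fin (n+2)) = 0 then x else if (0 : Fin (n+2)) = 1 then y else 0) + t * w₂ 0 = x + t * w₂ 0 := by simp
  have v1 : (if (1 : Fin (n+2)) = 0 then x else if (1 : Fin (n+2)) = 1 then y else 0) + t * w₂ 1 = y + t * w₂ 1 := by
    rw [if_neg (by simp [Fin.ext_iff]), if_pos rfl]
  rw [h0 0, h0 1, v0, v1]
  have h2 : ∀ i : Fin n, |(((WithLp.equiv (ENNReal.ofReal p) (Fin (n + 2) → ℝ)).symm
        (fun i => if i = 0 then x else if i = 1 then y else 0) : PiLp (ENNReal.ofReal p) (fun _ : Fin (n + 2) => ℝ)) + t • w₂) i.succ.succ| ^ p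
      = |t| ^ p * |w₂ i.succ.succ| ^ p := by
    intro i
    rw [h0]
    rw [if_neg (Fin.succ_ne_zero _), if_neg, zero_add, abs_mul,
      Real.mul_rpow (abs_nonneg _) (abs_nonneg _)]
    · intro h
      simp [Fin.ext_iff, Fin.val_succ] at h
  rw [Finset.sum_congr rfl (fun i _ => h2 i), ← Finset.mul_sum]

lemma key2 {n : ℕ} {p : ℝ} (hp : 1 < p) (x y t : ℝ)
    (w₂ : PiLp (ENNReal.ofReal p) (fun _ : Fin (n + 2) => ℝ)) :
    ‖w₂ + t • ((WithLp.equiv (ENNReal.ofReal p) (Fin (n + 2) → ℝ)).symm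
      (fun i => if i = 0 then x else if i = 1 then y else 0) : PiLp (ENNReal.ofReal p) (fun _ : Fin (n + 2) => ℝ))‖ ^ p
    = ‖vecP p (w₂ 0) (w₂ 1) + t • vecP p x y‖ ^ p
      + ∑ i : Fin n, |w₂ i.succ.succ| ^ p := by
  rw [vecP_add_smul, vecP_norm hp, normP_rpow hp, sum_split]
  have h0 : ∀ i : Fin (n+2),
      (w₂ + t • ((WithLp.equiv (ENNReal.ofReal p) (Fin (n + 2) → ℝ)).symm
        (fun i => if i = 0 then x else if i = 1 then y else 0) : PiLp (ENNReal.ofReal p) (fun _ : Fin (n + 2) => ℝ))) i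
      = w₂ i + t * (if i = 0 then x else if i = 1 then y else 0) := by
    intro i; simp
  have v0 : w₂ 0 + t * (if (0 : Fin (n+2)) = 0 then x else if (0 : Fin (n+2)) = 1 then y else 0) = w₂ 0 + t * x := by simp
  have v1 : w₂ 1 + t * (if (1 : Fin (n+2)) = 0 then x else if (1 : Fin (n+2)) = 1 then y else 0) = w₂ 1 + t * y := by
    rw [if_neg (by simp [Fin.ext_iff]), if_pos rfl]
  rw [h0 0, h0 1, v0, v1]
  have h2 : ∀ i : Fin n, |(w₂ + t • ((WithLp.equiv (ENNReal.ofReal p) (Fin (n + 2) → ℝ)).symm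
        (fun i => if i = 0 then x else if i = 1 then y else 0) : PiLp (ENNReal.ofReal p) (fun _ : Fin (n + 2) => ℝ))) i.succ.succ| ^ p
      = |w₂ i.succ.succ| ^ p := by
    intro i
    rw [h0, if_neg (Fin.succ_ne_zero _), if_neg, mul_zero, add_zero]
    · intro h
      simp [Fin.ext_iff, Fin.val_succ] at h
  rw [Finset.sum_congr rfl (fun i _ => h2 i)]

lemma le_of_rpow_le {a b p : ℝ} (hb : 0 ≤ b) (hp : 0 < p) (h : a ^ p ≤ b ^ p) : a ≤ b := by
  by_contra hc
  push_neg at hc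
  exact absurd h (not_le.mpr (Real.rpow_lt_rpow hb hc hp))

theorem stmt_8 (n : ℕ) (p : ℝ) (hp : 1 < p) [Fact (1 ≤ ENNReal.ofReal p)]
    (x y : ℝ)
    (w₁ : PiLp (ENNReal.ofReal p) (fun _ : Fin (n + 2) => ℝ))
    (hw₁ : w₁ = (WithLp.equiv (ENNReal.ofReal p) (Fin (n + 2) → ℝ)).symm
      (fun i => if i = 0 then x else if i = 1 then y else 0))
    (w₂ : PiLp (ENNReal.ofReal p) (fun _ : Fin (n + 2) => ℝ)) :
    ((∀ l : ℝ, ‖w₁‖ ≤ ‖w₁ + l • w₂‖) →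
      ∀ l : ℝ, ‖vecP p x y‖ ≤
        ‖vecP p x y + l • vecP p (WithLp.equiv _ _ w₂ 0) (WithLp.equiv _ _ w₂ 1)‖) ∧
    ((∀ l : ℝ, ‖w₂‖ ≤ ‖w₂ + l • w₁‖) →
      ∀ l : ℝ, ‖vecP p (WithLp.equiv _ _ w₂ 0) (WithLp.equiv _ _ w₂ 1)‖ ≤
        ‖vecP p (WithLp.equiv _ _ w₂ 0) (WithLp.equiv _ _ w₂ 1) + l • vecP p x y‖) := by
  subst hw₁
  have hp0 : (0:ℝ) < p := lt_trans one_pos hp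
  have hp1 : (0:ℝ) < p - 1 := by linarith
  have hK0 : 0 ≤ ∑ i : Fin n, |w₂ i.succ.succ| ^ p :=
    Finset.sum_nonneg fun i _ => Real.rpow_nonneg (abs_nonneg _) _
  simp only [WithLp.equiv_apply]
  constructor
  · intro H l
    by_contra hcon
    push_neg at hcon
    set K := ∑ i : Fin n, |w₂ i.succ.succ| ^ p with hKdef
    set a := ‖vecP p x y‖ with hadef
    set b := ‖vecP p x y + l • vecP p (w₂ 0) (w₂ 1)‖ with hbdef
    have hb0 : 0 ≤ b := norm_nonneg _
    have ha : 0 < a := lt_of_le_of_lt hb0 hcon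
    set δ := a - b with hδdef
    have hδ : 0 < δ := by simp only [hδdef]; linarith
    set C := |l| ^ p * K with hCdef
    have hC0 : 0 ≤ C := mul_nonneg (Real.rpow_nonneg (abs_nonneg _) _) hK0
    set A := a ^ (p - 1) with hAdef
    have hA : 0 < A := Real.rpow_pos_of_pos ha _
    set B := δ * A / (C + 1) with hBdef
    have hB : 0 < B := by positivity
    set s := min 1 (min (a / (2 * δ)) (B ^ (1 / (p - 1)))) with hsdef
    have hs0 : 0 < s :=
      lt_min one_pos (lt_min (by positivity) (Real.rpow_pos_of_pos hB _))
    have hs1 : s ≤ 1 := min_le_left _ _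
    have hs2 : s ≤ a / (2 * δ) := le_trans (min_le_right _ _) (min_le_left _ _)
    have hs3 : s ≤ B ^ (1 / (p - 1)) := le_trans (min_le_right _ _) (min_le_right _ _)
    clear_value K a b δ C A B s
    have hsδ : s * δ ≤ a / 2 := by
      calc s * δ ≤ (a / (2 * δ)) * δ := mul_le_mul_of_nonneg_right hs2 hδ.le
        _ = a / 2 := by field_simp
    -- convexity
    have conv : ‖vecP p x y + (s * l) • vecP p (w₂ 0) (w₂ 1)‖ ≤ a - s * δ := by
      have e : vecP p x y + (s * l) • vecP p (w₂ 0) (w₂ 1)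
          = (1 - s) • vecP p x y + s • (vecP p x y + l • vecP p (w₂ 0) (w₂ 1)) := by
        rw [smul_add, smul_smul, sub_smul, one_smul]
        abel
      rw [e]
      calc ‖(1 - s) • vecP p x y + s • (vecP p x y + l • vecP p (w₂ 0) (w₂ 1))‖
          ≤ ‖(1 - s) • vecP p x y‖ + ‖s • (vecP p x y + l • vecP p (w₂ 0) (w₂ 1))‖ :=
            norm_add_le _ _
        _ = (1 - s) * a + s * b := by
            rw [hadef, hbdef, norm_smul, norm_smul, Real.norm_eq_abs, Real.norm_eq_abs,
              abs_of_nonneg (by linarith), abs_of_nonneg hs0.le]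
        _ = a - s * δ := by rw [hδdef]; ring
    have hc2 : 0 ≤ a - s * δ := by linarith
    -- main inequality
    have e0 : ‖((WithLp.equiv (ENNReal.ofReal p) (Fin (n + 2) → ℝ)).symm
        (fun i => if i = 0 then x else if i = 1 then y else 0) :
          PiLp (ENNReal.ofReal p) (fun _ : Fin (n + 2) => ℝ))‖ ^ p = a ^ p := by
      have h := key1 hp x y 0 w₂
      rw [zero_smul, add_zero, zero_smul, add_zero, abs_zero,
        Real.zero_rpow hp0.ne', zero_mul, add_zero] at h
      rw [hadef]
      exact h
    have main : a ^ p ≤ (a - s * δ) ^ p + s ^ p * C := by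
      have h1 := Real.rpow_le_rpow (norm_nonneg _) (H (s * l)) hp0.le
      rw [e0, key1 hp x y (s * l) w₂, ← hKdef] at h1
      have h2 : ‖vecP p x y + (s * l) • vecP p (w₂ 0) (w₂ 1)‖ ^ p ≤ (a - s * δ) ^ p :=
        Real.rpow_le_rpow (norm_nonneg _) conv hp0.le
      have h3 : |s * l| ^ p * K = s ^ p * C := by
        rw [abs_mul, abs_of_nonneg hs0.le, Real.mul_rpow hs0.le (abs_nonneg _), hCdef]
        ring
      rw [h3] at h1
      linarith
    -- upper bounds
    have hApa : A = a ^ p / a := by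
      rw [hAdef, Real.rpow_sub ha, Real.rpow_one]
    have ub1 : (a - s * δ) ^ p ≤ a ^ p - s * δ * A := by
      have h4 : a - s * δ = a * (1 - s * δ / a) := by field_simp
      have hlt : s * δ < a := lt_of_le_of_lt hsδ (by linarith)
      have h5 : (0:ℝ) < 1 - s * δ / a := by
        have : s * δ / a < 1 := (div_lt_one ha).mpr hlt
        linarith
      have h6 : (1 - s * δ / a) ^ p ≤ 1 - s * δ / a := by
        have h7 : 1 - s * δ / a ≤ 1 := by
          have : 0 ≤ s * δ / a := by positivity
          linarith
        calc (1 - s * δ / a) ^ p ≤ (1 - s * δ / a) ^ (1:ℝ) :=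
              Real.rpow_le_rpow_of_exponent_ge h5 h7 hp.le
          _ = 1 - s * δ / a := Real.rpow_one _
      calc (a - s * δ) ^ p = a ^ p * (1 - s * δ / a) ^ p := by
            rw [h4, Real.mul_rpow ha.le h5.le]
        _ ≤ a ^ p * (1 - s * δ / a) :=
            mul_le_mul_of_nonneg_left h6 (Real.rpow_nonneg ha.le _)
        _ = a ^ p - s * δ * (a ^ p / a) := by field_simp
        _ = a ^ p - s * δ * A := by rw [hApa]
    have ub2 : s ^ p * C < s * δ * A := by
      have hsp : s ^ (p - 1) ≤ B := by
        calc s ^ (p - 1) ≤ (B ^ (1 / (p - 1))) ^ (p - 1) :=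
              Real.rpow_le_rpow hs0.le hs3 hp1.le
          _ = B := by
              rw [← Real.rpow_mul hB.le, one_div_mul_cancel hp1.ne', Real.rpow_one]
      have hspp : s ^ p = s ^ (p - 1) * s := by
        have e : s ^ ((p - 1) + 1) = s ^ (p - 1) * s ^ (1:ℝ) := Real.rpow_add hs0 _ _
        have hpe : (p - 1) + 1 = p := by ring
        rw [hpe, Real.rpow_one] at e
        exact e
      have hBC : B * (C + 1) = δ * A := by
        have hC1 : C + 1 ≠ 0 := by positivity
        rw [hBdef]
        field_simp
      calc s ^ p * C = s ^ (p - 1) * s * C := by rw [hspp]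
        _ ≤ B * s * C :=
            mul_le_mul_of_nonneg_right (mul_le_mul_of_nonneg_right hsp hs0.le) hC0
        _ < B * s * (C + 1) := by have h := mul_pos hB hs0; nlinarith
        _ = s * δ * A := by rw [mul_comm B s, mul_assoc, hBC]; ring
    linarith
  · intro H l
    have e1 := key2 hp x y 0 w₂
    rw [zero_smul, add_zero, zero_smul, add_zero] at e1
    have e2 := key2 hp x y l w₂
    have h1 := Real.rpow_le_rpow (norm_nonneg _) (H l) hp0.le
    rw [e1, e2] at h1
    have h2 : ‖vecP p (w₂ 0) (w₂ 1)‖ ^ p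
        ≤ ‖vecP p (w₂ 0) (w₂ 1) + l • vecP p x y‖ ^ p := by linarith
    exact le_of_rpow_le (norm_nonneg _) hp0 h2
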